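/- Let θ, x, z solve x' = cos θ, z' = sin θ, z > 0, with (1 + b cos θ)·z·θ' + 2 cos θ − b sin²θ = 0, θ(0) = 0, and b ≥ 0. Then cos θ(s) ≠ 0 for all s (so −π/2 < θ(s) < π/2), θ is strictly decreasing, z is strictly decreasing for s > 0, and the maximal positive time of existence s̄ is finite. -/

import Mathlib

open Real Set Filter Topology

noncomputable def cstar (b : ℝ) : ℝ := b / (1 + Real.sqrt (1 + b ^ 2))
noncomputable def tstar (b : ℝ) : ℝ := Real.arccos (cstar b)

lemma denom_pos (b : ℝ) : 0 < 1 + Real.sqrt (1 + b ^ 2) := by positivity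

lemma cstar_nonneg {b : ℝ} (hb : 0 ≤ b) : 0 ≤ cstar b :=
  div_nonneg hb (denom_pos b).le

lemma cstar_lt_one {b : ℝ} (hb : 0 ≤ b) : cstar b < 1 := by
  rw [cstar, div_lt_one (denom_pos b)]
  have h1 : b ≤ Real.sqrt (1 + b ^ 2) := by
    calc b ≤ Real.sqrt (b ^ 2) := by rw [Real.sqrt_sq hb]
    _ ≤ _ := Real.sqrt_le_sqrt (by linarith)
  linarith

lemma cstar_root (b : ℝ) : b * cstar b ^ 2 + 2 * cstar b - b = 0 := by
  have hS : Real.sqrt (1 + b ^ 2) ^ 2 = 1 + b ^ 2 := Real.sq_sqrt (by positivity)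
  have h1 : (1 + Real.sqrt (1 + b ^ 2)) ≠ 0 := ne_of_gt (denom_pos b)
  rw [cstar]
  field_simp
  linear_combination (-(b * (1 + Real.sqrt (1 + b ^ 2))) + b * Real.sqrt (1 + b ^ 2)) * hS

lemma tstar_pos {b : ℝ} (hb : 0 ≤ b) : 0 < tstar b :=
  Real.arccos_pos.mpr (cstar_lt_one hb)

lemma tstar_le {b : ℝ} (hb : 0 ≤ b) : tstar b ≤ π / 2 :=
  Real.arccos_le_pi_div_two.mpr (cstar_nonneg hb)

lemma cos_tstar {b : ℝ} (hb : 0 ≤ b) : Real.cos (tstar b) = cstar b :=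
  Real.cos_arccos (by linarith [cstar_nonneg hb]) (cstar_lt_one hb).le

lemma cos_ge_of_mem {b x : ℝ} (hb : 0 ≤ b) (h1 : -(tstar b) ≤ x) (h2 : x ≤ tstar b) :
    cstar b ≤ Real.cos x := by
  rw [← cos_tstar hb, ← Real.cos_abs x]
  apply Real.cos_le_cos_of_nonneg_of_le_pi (abs_nonneg x)
  · linarith [tstar_le hb, Real.pi_pos]
  · rw [abs_le]; exact ⟨h1, h2⟩

lemma cos_gt_of_mem {b x : ℝ} (hb : 0 ≤ b) (h1 : -(tstar b) < x) (h2 : x < tstar b) :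
    cstar b < Real.cos x := by
  rw [← cos_tstar hb, ← Real.cos_abs x]
  apply Real.cos_lt_cos_of_nonneg_of_le_pi (abs_nonneg x)
  · linarith [tstar_le hb, Real.pi_pos]
  · rw [abs_lt]; exact ⟨h1, h2⟩

lemma qsign {b c : ℝ} (hb : 0 ≤ b) (hc : cstar b ≤ c) : 0 ≤ b * c ^ 2 + 2 * c - b := by
  have hC := cstar_nonneg hb
  have hr := cstar_root b
  nlinarith [mul_nonneg (sub_nonneg.2 hc) (show (0:ℝ) ≤ b * (c + cstar b) + 2 by nlinarith)]

lemma qsign' {b c : ℝ} (hb : 0 ≤ b) (hc : cstar b < c) : 0 < b * c ^ 2 + 2 * c - b := by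
  have hC := cstar_nonneg hb
  have hr := cstar_root b
  nlinarith [mul_pos (sub_pos.2 hc) (show (0:ℝ) < b * (c + cstar b) + 2 by nlinarith)]

lemma cos_lip (x y : ℝ) : |Real.cos x - Real.cos y| ≤ |x - y| := by
  rw [Real.cos_sub_cos, abs_mul, abs_mul, abs_neg]
  have h1 : |Real.sin ((x + y) / 2)| ≤ 1 := Real.abs_sin_le_one _
  have h2 : |Real.sin ((x - y) / 2)| ≤ |(x - y) / 2| := Real.abs_sin_le_abs
  have h3 : |(x - y) / 2| = |x - y| / 2 := by rw [abs_div]; norm_num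
  have h4 : (0:ℝ) ≤ |Real.sin ((x - y) / 2)| := abs_nonneg _
  have h5 : |(2:ℝ)| = 2 := by norm_num
  rw [h5]
  nlinarith [abs_nonneg ((x+y)/2), abs_nonneg (x - y)]

lemma thetad_neg' {b zs c d : ℝ} (hb : 0 ≤ b) (hz : 0 < zs) (hc : cstar b < c)
    (hW : (1 + b * c) * zs * d + 2 * c - b * (1 - c ^ 2) = 0) : d < 0 := by
  have hq := qsign' hb hc
  have hcpos : 0 < 1 + b * c := by nlinarith [cstar_nonneg hb]
  by_contra h
  push_neg at h
  nlinarith [mul_nonneg (mul_nonneg hcpos.le hz.le) h]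

lemma fwd (b : ℝ) (θ z θd : ℝ → ℝ) (I : Set ℝ)
    (hI : I.OrdConnected) (hIopen : IsOpen I) (hI0 : (0 : ℝ) ∈ I)
    (hz : ∀ s ∈ I, HasDerivAt z (Real.sin (θ s)) s)
    (hθ : ∀ s ∈ I, HasDerivAt θ (θd s) s)
    (hzpos : ∀ s ∈ I, 0 < z s)
    (hW : ∀ s ∈ I, (1 + b * Real.cos (θ s)) * z s * θd s
      + 2 * Real.cos (θ s) - b * Real.sin (θ s) ^ 2 = 0)
    (hθ0 : θ 0 = 0) (hb : 0 ≤ b) :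
    ∀ s ∈ I, 0 ≤ s → -(tstar b) < θ s ∧ θ s < tstar b := by
  set T := tstar b with hTdef
  have hTpos : 0 < T := tstar_pos hb
  have hT2 : T ≤ π / 2 := tstar_le hb
  -- rewrite hW using sin^2 = 1 - cos^2
  have hW' : ∀ s ∈ I, (1 + b * Real.cos (θ s)) * z s * θd s
      + 2 * Real.cos (θ s) - b * (1 - Real.cos (θ s) ^ 2) = 0 := by
    intro s hs
    have := hW s hs
    rw [Real.sin_sq] at this
    linarith
  have hθdneg : ∀ s ∈ I, -T < θ s → θ s < T → θd s < 0 := fun s hs h1 h2 =>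
    thetad_neg' hb (hzpos s hs) (cos_gt_of_mem hb h1 h2) (hW' s hs)
  by_contra hcon
  push_neg at hcon
  obtain ⟨s₂, hs₂I, hs₂0, hout⟩ := hcon
  have hsub : Icc 0 s₂ ⊆ I := hI.out hI0 hs₂I
  have hθc : ContinuousOn θ I := fun t ht => (hθ t ht).continuousAt.continuousWithinAt
  set A : Set ℝ := Icc 0 s₂ ∩ θ ⁻¹' (Iic (-T) ∪ Ici T) with hAdef
  have hAclosed : IsClosed A :=
    ContinuousOn.preimage_isClosed_of_isClosed (hθc.mono hsub) isClosed_Icc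
      (isClosed_Iic.union isClosed_Ici)
  have hs₂A : s₂ ∈ A := by
    refine ⟨⟨hs₂0, le_refl _⟩, ?_⟩
    rcases le_or_gt (θ s₂) (-T) with h | h
    · exact Or.inl h
    · refine Or.inr ?_
      by_contra h2
      exact (hout h).not_gt (lt_of_not_ge h2)
  have hAbdd : BddBelow A := ⟨0, fun t ht => ht.1.1⟩
  set s₁ := sInf A with hs₁def
  have hs₁A : s₁ ∈ A := hAclosed.csInf_mem ⟨s₂, hs₂A⟩ hAbdd
  have hs₁mem : s₁ ∈ Icc 0 s₂ := hs₁A.1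
  have hs₁I : s₁ ∈ I := hsub hs₁mem
  have hbefore : ∀ t, 0 ≤ t → t < s₁ → -T < θ t ∧ θ t < T := by
    intro t ht0 hts₁
    by_contra h
    have hmem : θ t ∈ Iic (-T) ∪ Ici T := by
      rcases le_or_gt (θ t) (-T) with h1 | h1
      · exact Or.inl h1
      · refine Or.inr ?_
        by_contra h2
        exact h ⟨h1, lt_of_not_ge h2⟩
    exact absurd (csInf_le hAbdd ⟨⟨ht0, le_trans hts₁.le hs₁mem.2⟩, hmem⟩)
      (not_le.mpr hts₁)
  have hs₁pos : 0 < s₁ := by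
    rcases eq_or_lt_of_le hs₁mem.1 with h | h
    · exfalso
      rcases hs₁A.2 with h2 | h2
      · rw [← h, hθ0] at h2; simp only [mem_Iic] at h2; linarith
      · rw [← h, hθ0] at h2; simp only [mem_Ici] at h2; linarith
    · exact h
  have hsub1 : Icc 0 s₁ ⊆ I := fun t ht => hsub ⟨ht.1, le_trans ht.2 hs₁mem.2⟩
  -- θ is strictly decreasing on [0, s₁]
  have hanti : StrictAntiOn θ (Icc 0 s₁) := by
    apply strictAntiOn_of_deriv_neg (convex_Icc 0 s₁) (hθc.mono hsub1)
    intro t ht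
    rw [interior_Icc] at ht
    have htI : t ∈ I := hsub1 ⟨ht.1.le, ht.2.le⟩
    have hbd := hbefore t ht.1.le ht.2
    rw [(hθ t htI).deriv]
    exact hθdneg t htI hbd.1 hbd.2
  rcases hs₁A.2 with hhit | hhit
  · -- θ s₁ ≤ -T; first show θ s₁ = -T by a limit argument
    simp only [mem_Iic] at hhit
    have hlim : Tendsto θ (nhdsWithin s₁ (Iio s₁)) (nhds (θ s₁)) :=
      ((hθ s₁ hs₁I).continuousAt.tendsto).mono_left nhdsWithin_le_nhds
    have hev : ∀ᶠ t in nhdsWithin s₁ (Iio s₁), -T ≤ θ t := by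
      filter_upwards [Ioo_mem_nhdsLT_of_mem (show s₁ ∈ Ioc 0 s₁ from ⟨hs₁pos, le_refl _⟩)]
        with t ht
      exact (hbefore t ht.1.le ht.2).1.le
    have hθs₁ : θ s₁ = -T := le_antisymm hhit (ge_of_tendsto hlim hev)
    -- Gronwall-type contradiction
    have hrange : ∀ t ∈ Icc 0 s₁, -T ≤ θ t ∧ θ t ≤ T := by
      intro t ht
      rcases eq_or_lt_of_le ht.2 with h | h
      · rw [h, hθs₁]; exact ⟨le_refl _, by linarith⟩
      · exact ⟨(hbefore t ht.1 h).1.le, (hbefore t ht.1 h).2.le⟩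
    have hzc : ContinuousOn z (Icc 0 s₁) :=
      fun t ht => ((hz t (hsub1 ht)).continuousAt).continuousWithinAt
    obtain ⟨t₀, ht₀mem, ht₀min⟩ := isCompact_Icc.exists_isMinOn
      (nonempty_Icc.mpr hs₁pos.le) hzc
    set m := z t₀ with hmdef
    have hm : 0 < m := hzpos t₀ (hsub1 ht₀mem)
    set K := (2 * b + 2) / m with hKdef
    have hK : 0 ≤ K := div_nonneg (by linarith) hm.le
    set φ : ℝ → ℝ := fun t => (θ t + T) * Real.exp (K * t) with hφdef
    have hφd : ∀ t ∈ I, HasDerivAt φ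
        (θd t * Real.exp (K * t) + (θ t + T) * (Real.exp (K * t) * K)) t := by
      intro t ht
      have h1 : HasDerivAt (fun t => θ t + T) (θd t) t := (hθ t ht).add_const T
      have h2 : HasDerivAt (fun t => Real.exp (K * t)) (Real.exp (K * t) * K) t := by
        have := ((hasDerivAt_id t).const_mul K).exp
        simpa using this
      exact h1.mul h2
    have hφmono : MonotoneOn φ (Icc 0 s₁) := by
      apply monotoneOn_of_deriv_nonneg (convex_Icc 0 s₁)
      · intro t ht
        exact ((hφd t (hsub1 ht)).continuousAt).continuousWithinAt
      · intro t ht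
        rw [interior_Icc] at ht
        exact ((hφd t (hsub1 ⟨ht.1.le, ht.2.le⟩)).differentiableAt).differentiableWithinAt
      · intro t ht
        rw [interior_Icc] at ht
        have htI : t ∈ I := hsub1 ⟨ht.1.le, ht.2.le⟩
        rw [(hφd t htI).deriv]
        -- key estimate
        have hbd := hbefore t ht.1.le ht.2
        set c := Real.cos (θ t) with hcdef
        have hcC : cstar b < c := cos_gt_of_mem hb hbd.1 hbd.2
        have hcC' : cstar b ≤ c := hcC.le
        have hq : 0 ≤ b * c ^ 2 + 2 * c - b := qsign hb hcC'
        have hWt : (1 + b * c) * z t * θd t = -(b * c ^ 2 + 2 * c - b) := by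
          have := hW' t htI; linarith
        have hzm : m ≤ z t := ht₀min ⟨ht.1.le, ht.2.le⟩
        have hbc : 0 ≤ b * c := mul_nonneg hb (le_trans (cstar_nonneg hb) hcC')
        have hhm : m ≤ (1 + b * c) * z t := by nlinarith [hzpos t htI]
        have hθdle : θd t ≤ 0 := le_of_lt (hθdneg t htI hbd.1 hbd.2)
        -- Lipschitz bound: b*c^2 + 2*c - b ≤ (2b+2) * (θ t + T)
        have hu : 0 ≤ θ t + T := by linarith
        have hcos : c - cstar b ≤ θ t + T := by
          have hl := cos_lip (θ t) (-T)
          have h1 : Real.cos (-T) = cstar b := by rw [Real.cos_neg]; exact cos_tstar hb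
          have h2 : |θ t - (-T)| = θ t + T := by rw [abs_of_nonneg] <;> ring_nf <;> linarith
          calc c - cstar b ≤ |c - cstar b| := le_abs_self _
            _ = |Real.cos (θ t) - Real.cos (-T)| := by rw [h1]
            _ ≤ |θ t - (-T)| := hl
            _ = θ t + T := h2
        have hc1 : c ≤ 1 := Real.cos_le_one _
        have hC0 : 0 ≤ cstar b := cstar_nonneg hb
        have hC1 : cstar b < 1 := cstar_lt_one hb
        have hlip : b * c ^ 2 + 2 * c - b ≤ (2 * b + 2) * (θ t + T) := by
          have hroot := cstar_root b
          have h4 : (c - cstar b) * (b * (c + cstar b) + 2) ≤ (θ t + T) * (2 * b + 2) := by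
            apply mul_le_mul hcos (by nlinarith) (by nlinarith) hu
          have h5 : b * c ^ 2 + 2 * c - b
              = (c - cstar b) * (b * (c + cstar b) + 2)
                + (b * cstar b ^ 2 + 2 * cstar b - b) := by ring
          linarith
        -- combine: m * θd t + (2b+2) * (θ t + T) ≥ 0
        have h6 : (1 + b * c) * z t * θd t ≤ m * θd t :=
          mul_le_mul_of_nonpos_right hhm hθdle
        have hkey : 0 ≤ m * θd t + (2 * b + 2) * (θ t + T) := by linarith
        have hexp : 0 < Real.exp (K * t) := Real.exp_pos _
        have hKu : 0 ≤ θd t + K * (θ t + T) := by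
          have hKm : K * m = 2 * b + 2 := div_mul_cancel₀ _ hm.ne'
          have h7 : 0 ≤ m * (θd t + K * (θ t + T)) := by
            have h8 : m * (θd t + K * (θ t + T)) = m * θd t + (K * m) * (θ t + T) := by
              ring
            rw [h8, hKm]; exact hkey
          exact nonneg_of_mul_nonneg_right (by linarith) hm
        have h9 : θd t * Real.exp (K * t) + (θ t + T) * (Real.exp (K * t) * K)
            = (θd t + K * (θ t + T)) * Real.exp (K * t) := by ring
        rw [h9]
        exact mul_nonneg hKu hexp.le
    have h0mem : (0:ℝ) ∈ Icc 0 s₁ := ⟨le_refl _, hs₁pos.le⟩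
    have hs₁mem' : s₁ ∈ Icc 0 s₁ := ⟨hs₁pos.le, le_refl _⟩
    have := hφmono h0mem hs₁mem' hs₁pos.le
    rw [hφdef] at this
    simp only [hθ0, hθs₁] at this
    simp only [zero_add, mul_zero, Real.exp_zero, mul_one, neg_add_cancel, zero_mul] at this
    linarith
  · -- θ s₁ ≥ T: contradiction with strict decrease
    simp only [mem_Ici] at hhit
    have := hanti ⟨le_refl _, hs₁pos.le⟩ ⟨hs₁pos.le, le_refl _⟩ hs₁pos
    rw [hθ0] at this
    linarith

/-- Case `2H + bK = 0` with `b ≥ 0`, `θ(0) = 0`: along the generating curve,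
`cos θ ≠ 0` (so `-π/2 < θ < π/2`), `θ` is strictly decreasing, `z` is strictly
decreasing for `s > 0`, and the maximal positive time of existence is finite. -/
theorem stmt11 (b : ℝ) (θ x z θd : ℝ → ℝ) (I : Set ℝ)
    (hI : I.OrdConnected) (hIopen : IsOpen I) (hI0 : (0 : ℝ) ∈ I)
    (hx : ∀ s ∈ I, HasDerivAt x (Real.cos (θ s)) s)
    (hz : ∀ s ∈ I, HasDerivAt z (Real.sin (θ s)) s)
    (hθ : ∀ s ∈ I, HasDerivAt θ (θd s) s)
    (hzpos : ∀ s ∈ I, 0 < z s)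
    (hW : ∀ s ∈ I, (1 + b * Real.cos (θ s)) * z s * θd s
      + 2 * Real.cos (θ s) - b * Real.sin (θ s) ^ 2 = 0)
    (hθ0 : θ 0 = 0) (hb : 0 ≤ b)
    (hmax : ∀ (J : Set ℝ) (θ₂ x₂ z₂ θd₂ : ℝ → ℝ),
      J.OrdConnected → IsOpen J → I ⊆ J →
      (∀ s ∈ I, θ₂ s = θ s ∧ x₂ s = x s ∧ z₂ s = z s) →
      (∀ s ∈ J, HasDerivAt x₂ (Real.cos (θ₂ s)) s ∧
        HasDerivAt z₂ (Real.sin (θ₂ s)) s ∧ HasDerivAt θ₂ (θd₂ s) s ∧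
        0 < z₂ s ∧ (1 + b * Real.cos (θ₂ s)) * z₂ s * θd₂ s
          + 2 * Real.cos (θ₂ s) - b * Real.sin (θ₂ s) ^ 2 = 0) →
      J ⊆ I) :
    (∀ s ∈ I, Real.cos (θ s) ≠ 0 ∧ -(π / 2) < θ s ∧ θ s < π / 2) ∧
    StrictAntiOn θ I ∧
    StrictAntiOn z (I ∩ Ici 0) ∧
    BddAbove I := by
  have hTpos : 0 < tstar b := tstar_pos hb
  have hT2 : tstar b ≤ π / 2 := tstar_le hb
  -- global bound on θ via fwd applied forward and backward
  have hbnd : ∀ s ∈ I, -(tstar b) < θ s ∧ θ s < tstar b := by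
    intro s hs
    rcases le_or_gt 0 s with h0 | h0
    · exact fwd b θ z θd I hI hIopen hI0 hz hθ hzpos hW hθ0 hb s hs h0
    · -- reflected system
      set J : Set ℝ := Neg.neg ⁻¹' I with hJdef
      have hJord : J.OrdConnected := by
        refine ⟨fun u hu v hv t ht => ?_⟩
        exact hI.out hv hu ⟨neg_le_neg ht.2, neg_le_neg ht.1⟩
      have hJopen : IsOpen J := hIopen.preimage continuous_neg
      have hJ0 : (0:ℝ) ∈ J := by simpa [hJdef] using hI0
      have key := fwd b (fun t => -θ (-t)) (fun t => z (-t)) (fun t => θd (-t)) J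
        hJord hJopen hJ0
        (fun t ht => by
          have h1 : HasDerivAt (fun u => z (-u)) (Real.sin (θ (-t)) * (-1)) t :=
            (hz (-t) ht).comp t (hasDerivAt_neg t)
          have h2 : Real.sin (θ (-t)) * (-1) = Real.sin (-θ (-t)) := by
            rw [Real.sin_neg]; ring
          rw [h2] at h1
          exact h1)
        (fun t ht => by
          have h1 : HasDerivAt (fun u => θ (-u)) (θd (-t) * (-1)) t :=
            (hθ (-t) ht).comp t (hasDerivAt_neg t)
          have h2 := h1.neg
          exact h2.congr_deriv (by ring))
        (fun t ht => hzpos (-t) ht)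
        (fun t ht => by
          have := hW (-t) ht
          simpa [Real.cos_neg, Real.sin_neg] using this)
        (by simp [hθ0]) hb
      have hsJ : -s ∈ J := by simpa [hJdef] using hs
      have := key (-s) hsJ (by linarith)
      simp only [neg_neg] at this
      exact ⟨by linarith [this.2], by linarith [this.1]⟩
  have hcospos : ∀ s ∈ I, 0 < Real.cos (θ s) := by
    intro s hs
    apply Real.cos_pos_of_mem_Ioo
    constructor
    · linarith [(hbnd s hs).1]
    · linarith [(hbnd s hs).2]
  have hθdneg : ∀ s ∈ I, θd s < 0 := by
    intro s hs
    have hW' : (1 + b * Real.cos (θ s)) * z s * θd s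
        + 2 * Real.cos (θ s) - b * (1 - Real.cos (θ s) ^ 2) = 0 := by
      have := hW s hs
      rw [Real.sin_sq] at this
      linarith
    exact thetad_neg' hb (hzpos s hs)
      (cos_gt_of_mem hb (hbnd s hs).1 (hbnd s hs).2) hW'
  have hconvex : Convex ℝ I := convex_iff_ordConnected.mpr hI
  have hθc : ContinuousOn θ I := fun t ht => (hθ t ht).continuousAt.continuousWithinAt
  have hθanti : StrictAntiOn θ I := by
    apply strictAntiOn_of_deriv_neg hconvex hθc
    intro t ht
    rw [hIopen.interior_eq] at ht
    rw [(hθ t ht).deriv]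
    exact hθdneg t ht
  refine ⟨?_, hθanti, ?_, ?_⟩
  · intro s hs
    exact ⟨ne_of_gt (hcospos s hs),
      by linarith [(hbnd s hs).1], by linarith [(hbnd s hs).2]⟩
  · -- z strictly decreasing on I ∩ Ici 0
    have hint : interior (I ∩ Ici 0) = I ∩ Ioi 0 := by
      rw [interior_inter, hIopen.interior_eq, interior_Ici]
    apply strictAntiOn_of_deriv_neg (hconvex.inter (convex_Ici 0))
    · exact fun t ht => ((hz t ht.1).continuousAt).continuousWithinAt
    · intro t ht
      rw [hint] at ht
      rw [(hz t ht.1).deriv]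
      have hneg : θ t < 0 := by
        have := hθanti hI0 ht.1 ht.2
        rwa [hθ0] at this
      apply Real.sin_neg_of_neg_of_neg_pi_lt hneg
      linarith [(hbnd t ht.1).1, Real.pi_pos]
  · -- BddAbove I
    by_contra hBdd
    rw [not_bddAbove_iff] at hBdd
    obtain ⟨ε, hε, hball⟩ := Metric.isOpen_iff.mp hIopen 0 hI0
    have hs₀I : ε / 2 ∈ I := by
      apply hball
      rw [Metric.mem_ball, Real.dist_eq]
      rw [abs_of_pos (by linarith)]
      linarith
    set s₀ := ε / 2 with hs₀def
    have hs₀pos : 0 < s₀ := by positivity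
    have hIci : Ici s₀ ⊆ I := by
      intro s hs
      obtain ⟨y, hyI, hy⟩ := hBdd s
      exact hI.out hs₀I hyI ⟨hs, hy.le⟩
    have hθs₀ : θ s₀ < 0 := by
      have := hθanti hI0 hs₀I hs₀pos
      rwa [hθ0] at this
    set c := -Real.sin (θ s₀) with hcdef
    have hcpos : 0 < c := by
      rw [hcdef, neg_pos]
      apply Real.sin_neg_of_neg_of_neg_pi_lt hθs₀
      linarith [(hbnd s₀ hs₀I).1, Real.pi_pos]
    set w : ℝ → ℝ := fun s => z s + c * s with hwdef
    have hwd : ∀ s ∈ I, HasDerivAt w (Real.sin (θ s) + c) s := by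
      intro s hs
      rw [hwdef]
      have := (hz s hs).add ((hasDerivAt_id' s).const_mul c)
      exact this.congr_deriv (by ring)
    have hwanti : AntitoneOn w (Ici s₀) := by
      apply antitoneOn_of_deriv_nonpos (convex_Ici s₀)
      · exact fun t ht => ((hwd t (hIci ht)).continuousAt).continuousWithinAt
      · intro t ht
        rw [interior_Ici] at ht
        exact ((hwd t (hIci (mem_Ici.mpr (mem_Ioi.mp ht).le))).differentiableAt).differentiableWithinAt
      · intro t ht
        rw [interior_Ici] at ht
        have htI : t ∈ I := hIci (mem_Ici.mpr (mem_Ioi.mp ht).le)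
        rw [(hwd t htI).deriv]
        have h1 : θ t < θ s₀ := hθanti hs₀I htI ht
        have h2 : Real.sin (θ t) < Real.sin (θ s₀) := by
          apply Real.sin_lt_sin_of_lt_of_le_pi_div_two _ _ h1
          · linarith [(hbnd t htI).1]
          · linarith [(hbnd s₀ hs₀I).2]
        rw [hcdef]; linarith
    have hq : 0 < z s₀ / c := div_pos (hzpos s₀ hs₀I) hcpos
    have hs₁ : s₀ ≤ s₀ + z s₀ / c := by linarith
    have h10 := hwanti (mem_Ici.mpr (le_refl s₀)) (mem_Ici.mpr hs₁) hs₁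
    simp only [hwdef] at h10
    have hz₁ : 0 < z (s₀ + z s₀ / c) := hzpos _ (hIci (mem_Ici.mpr hs₁))
    have hcz : c * (z s₀ / c) = z s₀ := mul_div_cancel₀ _ hcpos.ne'
    nlinarith [h10, hz₁, hcz]
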